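/- Let G be a finite group and φ : G → G an endomorphism. Let W be the complex vector space of class functions on G (functions G → ℂ constant on ordinary conjugacy classes), and let B : W → W be the linear map B(f) = f ∘ φ. Then R(φ) = Tr(B). -/

import Mathlib

/-- Two elements `a`, `b` of a group are `φ`-conjugate if `b = γ * a * (φ γ)⁻¹` for some `γ`. -/
def phiConj {G : Type*} [Group G] (φ : G → G) (a b : G) : Prop :=
  ∃ γ : G, b = γ * a * (φ γ)⁻¹

/-- The Reidemeister number of `φ`: the number of `φ`-conjugacy classes
(`0` if there are infinitely many). -/
noncomputable def reidemeisterNumber {G : Type*} [Group G] (φ : G → G) : ℕ :=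
  Nat.card (Quot (phiConj φ))


/-- The complex vector space of class functions on a group: functions `G → ℂ`
constant on ordinary conjugacy classes. -/
noncomputable def classFunctions (G : Type*) [Group G] : Submodule ℂ (G → ℂ) where
  carrier := {f | ∀ a b : G, IsConj a b → f a = f b}
  add_mem' := fun hf hg a b h => by simp only [Pi.add_apply, hf a b h, hg a b h]
  zero_mem' := fun _ _ _ => rfl
  smul_mem' := fun c f hf a b h => by simp only [Pi.smul_apply, hf a b h]

/-- The linear map `B : W → W`, `B(f) = f ∘ φ`, on class functions induced by an
endomorphism `φ`. -/
noncomputable def pullbackMap {G : Type*} [Group G] (φ : G →* G) :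
    classFunctions G →ₗ[ℂ] classFunctions G where
  toFun f := ⟨fun g => (f : G → ℂ) (φ g), fun a b h => f.2 _ _ (φ.map_isConj h)⟩
  map_add' _ _ := rfl
  map_smul' _ _ := rfl

/-! ### Auxiliary material -/

open MulAction Finset

section Aux

variable {G : Type*} [Group G]

/-- The induced map on conjugacy classes. -/
noncomputable def psi (φ : G →* G) : ConjClasses G → ConjClasses G :=
  Quotient.lift (fun x => ConjClasses.mk (φ x)) (fun a b h => by
    rw [ConjClasses.mk_eq_mk_iff_isConj]
    exact φ.map_isConj h)

lemma psi_mk (φ : G →* G) (a : G) : psi φ (ConjClasses.mk a) = ConjClasses.mk (φ a) := rfl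

/-! #### The trace computation -/

/-- Class functions are functions on conjugacy classes. -/
noncomputable def cfEquiv (G : Type*) [Group G] :
    classFunctions G ≃ₗ[ℂ] (ConjClasses G → ℂ) where
  toFun f := Quotient.lift (f : G → ℂ) (fun a b h => f.2 a b h)
  map_add' f g := funext fun c => Quotient.inductionOn' c (fun _ => rfl)
  map_smul' r f := funext fun c => Quotient.inductionOn' c (fun _ => rfl)
  invFun g := ⟨fun x => g (ConjClasses.mk x),
    fun a b h => congrArg g (ConjClasses.mk_eq_mk_iff_isConj.mpr h)⟩
  left_inv f := Subtype.ext (funext fun _ => rfl)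
  right_inv g := funext fun c => Quotient.inductionOn' c (fun _ => rfl)

lemma conj_pullback (φ : G →* G) :
    (cfEquiv G).conj (pullbackMap φ) = LinearMap.funLeft ℂ ℂ (psi φ) := by
  ext g c
  refine Quotient.inductionOn' c (fun x => ?_)
  rfl

lemma trace_funLeft {X : Type*} [Fintype X] [DecidableEq X] (σ : X → X) :
    LinearMap.trace ℂ (X → ℂ) (LinearMap.funLeft ℂ ℂ σ) = Nat.card {c : X // σ c = c} := by
  rw [LinearMap.trace_eq_matrix_trace ℂ (Pi.basisFun ℂ X), Matrix.trace]
  have : ∀ c : X, (LinearMap.toMatrix (Pi.basisFun ℂ X) (Pi.basisFun ℂ X)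
      (LinearMap.funLeft ℂ ℂ σ)).diag c = if σ c = c then 1 else 0 := by
    intro c
    simp [Matrix.diag, LinearMap.toMatrix_apply, LinearMap.funLeft_apply, Pi.single_apply]
  simp only [this]
  rw [Finset.sum_boole, Nat.card_eq_fintype_card, Fintype.card_subtype]

lemma key2 [Finite G] (φ : G →* G) :
    LinearMap.trace ℂ (classFunctions G) (pullbackMap φ)
      = Nat.card {c : ConjClasses G // psi φ c = c} := by
  classical
  letI : Fintype (ConjClasses G) := Fintype.ofFinite _
  rw [← LinearMap.trace_conj' (pullbackMap φ) (cfEquiv G), conj_pullback, trace_funLeft]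

/-! #### The twisted conjugation action -/

/-- Type synonym for the twisted conjugation action. -/
def TwConj (G : Type*) [Group G] (φ : G →* G) : Type _ := G

/-- The identity equivalence onto the type synonym. -/
def tw (φ : G →* G) : G ≃ TwConj G φ := Equiv.refl G

instance (φ : G →* G) : MulAction G (TwConj G φ) where
  smul g x := tw φ (g * (tw φ).symm x * (φ g)⁻¹)
  one_smul x := by
    show tw φ (1 * (tw φ).symm x * (φ 1)⁻¹) = x
    rw [map_one, inv_one, one_mul, mul_one, Equiv.apply_symm_apply]
  mul_smul g h x := by
    show tw φ ((g * h) * (tw φ).symm x * (φ (g * h))⁻¹)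
      = tw φ (g * (tw φ).symm (tw φ (h * (tw φ).symm x * (φ h)⁻¹)) * (φ g)⁻¹)
    rw [Equiv.symm_apply_apply]
    apply congrArg (tw φ)
    simp [mul_assoc]

lemma phiConj_symm {φ : G →* G} {a b : G} : phiConj ⇑φ a b → phiConj ⇑φ b a := by
  rintro ⟨γ, rfl⟩
  exact ⟨γ⁻¹, by simp [mul_assoc]⟩

/-- `φ`-conjugacy classes are the orbits of the twisted conjugation action. -/
noncomputable def quot_equiv (φ : G →* G) :
    Quot (phiConj ⇑φ) ≃ orbitRel.Quotient G (TwConj G φ) :=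
  Quot.congrRight (fun a b => by
    constructor
    · intro h
      obtain ⟨γ, rfl⟩ := phiConj_symm h
      exact ⟨γ, rfl⟩
    · rintro ⟨γ, h⟩
      exact phiConj_symm ⟨γ, congrArg (tw φ).symm h.symm⟩)

def fixedByEquiv (φ : G →* G) (g : G) :
    {x : G // g * x * (φ g)⁻¹ = x} ≃ fixedBy (TwConj G φ) g :=
  (tw φ).subtypeEquiv fun _ => Iff.rfl

def swapEquiv (φ : G →* G) :
    (Σ g : G, {x : G // g * x * (φ g)⁻¹ = x}) ≃ (Σ x : G, {g : G // g * x * g⁻¹ = φ x}) where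
  toFun p := ⟨p.1, ⟨p.2.1⁻¹, by
    obtain ⟨g, x, h⟩ := p
    show x⁻¹ * g * x⁻¹⁻¹ = φ g
    rw [mul_inv_eq_iff_eq_mul] at h
    rw [inv_inv, mul_assoc, h, ← mul_assoc, inv_mul_cancel, one_mul]⟩⟩
  invFun p := ⟨p.1, ⟨p.2.1⁻¹, by
    obtain ⟨a, b, h⟩ := p
    show a * b⁻¹ * (φ a)⁻¹ = b⁻¹
    rw [← h]
    group⟩⟩
  left_inv p := by obtain ⟨g, x, h⟩ := p; simp
  right_inv p := by obtain ⟨a, b, h⟩ := p; simp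

/-- Burnside applied to the twisted conjugation action. -/
lemma count1 [Finite G] (φ : G →* G) :
    Nat.card (Quot (phiConj ⇑φ)) * Nat.card G
      = Nat.card (Σ x : G, {g : G // g * x * g⁻¹ = φ x}) := by
  classical
  letI : Fintype G := Fintype.ofFinite G
  letI : Fintype (TwConj G φ) := (inferInstance : Fintype G)
  letI : ∀ a : G, Fintype (fixedBy (TwConj G φ) a) := fun _ => Fintype.ofFinite _
  letI : Fintype (orbitRel.Quotient G (TwConj G φ)) := Fintype.ofFinite _
  have B := MulAction.sum_card_fixedBy_eq_card_orbits_mul_card_group G (TwConj G φ)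
  have h1 : (∑ a : G, Fintype.card (fixedBy (TwConj G φ) a))
      = Fintype.card (Σ g : G, {x : G // g * x * (φ g)⁻¹ = x}) := by
    rw [Fintype.card_sigma]
    exact Finset.sum_congr rfl fun g _ => (Fintype.card_congr (fixedByEquiv φ g)).symm
  rw [Nat.card_congr (quot_equiv φ), Nat.card_eq_fintype_card, Nat.card_eq_fintype_card,
    Nat.card_eq_fintype_card, ← B, h1]
  exact Fintype.card_congr (swapEquiv φ)

/-! #### Counting the other side of the double count -/

noncomputable def stabEquiv (x : G) :
    {g : G // g * x * g⁻¹ = x} ≃ MulAction.stabilizer (ConjAct G) x where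
  toFun g := ⟨ConjAct.toConjAct g.1, by
    rw [MulAction.mem_stabilizer_iff, ConjAct.toConjAct_smul]; exact g.2⟩
  invFun s := ⟨ConjAct.ofConjAct s.1, by
    have h := s.2
    rwa [MulAction.mem_stabilizer_iff, ConjAct.smul_def] at h⟩
  left_inv g := Subtype.ext rfl
  right_inv s := Subtype.ext rfl

lemma cardT [Fintype G] [DecidableEq (ConjClasses G)] (φ : G →* G) (x : G) :
    Nat.card {g : G // g * x * g⁻¹ = φ x}
      = if psi φ (ConjClasses.mk x) = ConjClasses.mk x
        then Nat.card {g : G // g * x * g⁻¹ = x} else 0 := by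
  classical
  split_ifs with h
  · rw [psi_mk, ConjClasses.mk_eq_mk_iff_isConj] at h
    obtain ⟨d, hd⟩ := isConj_iff.mp h.symm
    have e1 : {g : G // g * x * g⁻¹ = φ x} ≃ {g : G // g * x * g⁻¹ = x} :=
      { toFun := fun g => ⟨d⁻¹ * g.1, by
          have k : g.1 * x * g.1⁻¹ = d * x * d⁻¹ := g.2.trans hd.symm
          have : d⁻¹ * g.1 * x * (d⁻¹ * g.1)⁻¹ = d⁻¹ * (g.1 * x * g.1⁻¹) * d := by group
          rw [this, k]; group⟩
        invFun := fun g => ⟨d * g.1, by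
          have : d * g.1 * x * (d * g.1)⁻¹ = d * (g.1 * x * g.1⁻¹) * d⁻¹ := by group
          rw [this, g.2, hd]⟩
        left_inv := fun g => by simp
        right_inv := fun g => by simp }
    exact Nat.card_congr e1
  · rw [Nat.card_eq_zero]
    left
    refine ⟨fun g => h ?_⟩
    rw [psi_mk, ConjClasses.mk_eq_mk_iff_isConj]
    exact (isConj_iff.mpr ⟨g.1, g.2⟩).symm

noncomputable def bigEquiv [Fintype G] (r : G) :
    (Σ x : {x : G // ConjClasses.mk x = ConjClasses.mk r}, {g : G // g * x.1 * g⁻¹ = x.1}) ≃ G := by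
  classical
  refine ?_
  calc (Σ x : {x : G // ConjClasses.mk x = ConjClasses.mk r}, {g : G // g * x.1 * g⁻¹ = x.1})
      ≃ (Σ y : orbit (ConjAct G) r, stabilizer (ConjAct G) (y : G)) := by
        refine Equiv.sigmaCongr (Equiv.subtypeEquivRight fun x => by
          rw [ConjClasses.mk_eq_mk_iff_isConj, ← ConjAct.mem_orbit_conjAct]) (fun x => ?_)
        exact stabEquiv x.1
    _ ≃ (Σ _ : orbit (ConjAct G) r, stabilizer (ConjAct G) r) := by
        refine Equiv.sigmaCongrRight (fun y => ?_)
        exact (stabilizerEquivStabilizerOfOrbitRel (MulAction.orbitRel_apply.mpr y.2)).toEquiv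
    _ ≃ orbit (ConjAct G) r × stabilizer (ConjAct G) r := Equiv.sigmaEquivProd _ _
    _ ≃ ConjAct G := orbitProdStabilizerEquivGroup (ConjAct G) r
    _ ≃ G := ConjAct.ofConjAct.toEquiv

lemma sum_fiber [Fintype G] [DecidableEq (ConjClasses G)] (c : ConjClasses G) :
    ∑ x ∈ Finset.univ.filter (fun x : G => ConjClasses.mk x = c),
      Nat.card {g : G // g * x * g⁻¹ = x} = Fintype.card G := by
  classical
  induction c using Quotient.inductionOn' with
  | h r =>
    change ∑ x ∈ Finset.univ.filter (fun x : G => ConjClasses.mk x = ConjClasses.mk r),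
      Nat.card {g : G // g * x * g⁻¹ = x} = Fintype.card G
    have hc : ∀ x : G, x ∈ Finset.univ.filter (fun x : G => ConjClasses.mk x = ConjClasses.mk r)
        ↔ ConjClasses.mk x = ConjClasses.mk r := by
      intro x; simp
    rw [Finset.sum_subtype _ hc (fun x => Nat.card {g : G // g * x * g⁻¹ = x})]
    simp only [Nat.card_eq_fintype_card]
    rw [← Fintype.card_sigma]
    exact Fintype.card_congr (bigEquiv r)

lemma count2 [Finite G] (φ : G →* G) :
    Nat.card (Σ x : G, {g : G // g * x * g⁻¹ = φ x})
      = Nat.card {c : ConjClasses G // psi φ c = c} * Nat.card G := by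
  classical
  letI : Fintype G := Fintype.ofFinite G
  have h0 : Nat.card (Σ x : G, {g : G // g * x * g⁻¹ = φ x})
      = ∑ x : G, Nat.card {g : G // g * x * g⁻¹ = φ x} := by
    rw [Nat.card_eq_fintype_card, Fintype.card_sigma]
    simp only [Nat.card_eq_fintype_card]
  rw [h0]
  have h1 : ∀ x : G, Nat.card {g : G // g * x * g⁻¹ = φ x}
      = if psi φ (ConjClasses.mk x) = ConjClasses.mk x
        then Nat.card {g : G // g * x * g⁻¹ = x} else 0 := cardT φ
  simp only [h1]
  rw [← Finset.sum_fiberwise Finset.univ (fun x : G => ConjClasses.mk x)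
    (fun x => if psi φ (ConjClasses.mk x) = ConjClasses.mk x
      then Nat.card {g : G // g * x * g⁻¹ = x} else 0)]
  have h2 : ∀ c : ConjClasses G,
      (∑ x ∈ Finset.univ.filter (fun x : G => ConjClasses.mk x = c),
        if psi φ (ConjClasses.mk x) = ConjClasses.mk x
          then Nat.card {g : G // g * x * g⁻¹ = x} else 0)
      = if psi φ c = c then Fintype.card G else 0 := by
    intro c
    split_ifs with h
    · rw [← sum_fiber c]
      refine Finset.sum_congr rfl fun x hx => ?_
      rw [Finset.mem_filter] at hx
      rw [hx.2, if_pos h]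
    · refine Finset.sum_eq_zero fun x hx => ?_
      rw [Finset.mem_filter] at hx
      rw [hx.2, if_neg h]
  simp only [h2]
  rw [Finset.sum_ite, Finset.sum_const, Finset.sum_const_zero, add_zero, smul_eq_mul]
  rw [Nat.card_eq_fintype_card, Nat.card_eq_fintype_card, Fintype.card_subtype]

/-- The Reidemeister number equals the number of conjugacy classes fixed by the induced map. -/
lemma key1 [Finite G] (φ : G →* G) :
    Nat.card (Quot (phiConj ⇑φ)) = Nat.card {c : ConjClasses G // psi φ c = c} := by
  have h := (count1 φ).trans (count2 φ)
  exact Nat.eq_of_mul_eq_mul_right Nat.card_pos h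

end Aux

/-- for a finite group `G` and endomorphism `φ`, `R(φ) = Tr B` where
`B(f) = f ∘ φ` on the space of class functions. -/
theorem stmt2 {G : Type*} [Group G] [Finite G] (φ : G →* G) :
    (reidemeisterNumber ⇑φ : ℂ) = LinearMap.trace ℂ (classFunctions G) (pullbackMap φ) := by
  rw [key2 φ]
  norm_cast
  exact key1 φ
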